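/- Let s₁ be the real 4-dimensional Lie algebra with basis e₁, e₂, e₃, e₄ and nonzero brackets ⁅e₂, e₄⁆ = −e₁ and ⁅e₃, e₄⁆ = −e₃ (all other brackets of basis elements zero, extended bilinearly and antisymmetrically). A linear equivalence T : s₁ ≃ s₁ is a Lie algebra automorphism of s₁ if and only if there exist real numbers a ≠ 0, c ≠ 0 and b, p, q, r ∈ ℝ such that T e₁ = a e₁, T e₂ = b e₁ + a e₂, T e₃ = c e₃, and T e₄ = p e₁ + q e₂ + r e₃ + e₄. -/

import Mathlib

/-- Characterization of the Lie algebra automorphisms of the real 4-dimensional Lie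
algebra `s₁` (Šnobl–Winternitz `s_{4,1}`), with basis `e₁ = b 0, …, e₄ = b 3` and
nonzero brackets `⁅e₂, e₄⁆ = -e₁`, `⁅e₃, e₄⁆ = -e₃`. -/
theorem stmt_10 {L : Type*} [LieRing L] [LieAlgebra ℝ L]
    (b : Module.Basis (Fin 4) ℝ L)
    (h12 : ⁅b 0, b 1⁆ = 0) (h13 : ⁅b 0, b 2⁆ = 0) (h14 : ⁅b 0, b 3⁆ = 0)
    (h23 : ⁅b 1, b 2⁆ = 0) (h24 : ⁅b 1, b 3⁆ = -b 0) (h34 : ⁅b 2, b 3⁆ = -b 2)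
    (T : L ≃ₗ[ℝ] L) :
    (∀ x y : L, T ⁅x, y⁆ = ⁅T x, T y⁆) ↔
      ∃ a c bb p q r : ℝ, a ≠ 0 ∧ c ≠ 0 ∧
        T (b 0) = a • b 0 ∧
        T (b 1) = bb • b 0 + a • b 1 ∧
        T (b 2) = c • b 2 ∧
        T (b 3) = p • b 0 + q • b 1 + r • b 2 + b 3 := by
  have h21 : ⁅b 1, b 0⁆ = 0 := by rw [← lie_skew, h12, neg_zero]
  have h31 : ⁅b 2, b 0⁆ = 0 := by rw [← lie_skew, h13, neg_zero]
  have h41 : ⁅b 3, b 0⁆ = 0 := by rw [← lie_skew, h14, neg_zero]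
  have h32 : ⁅b 2, b 1⁆ = 0 := by rw [← lie_skew, h23, neg_zero]
  have h42 : ⁅b 3, b 1⁆ = b 0 := by rw [← lie_skew, h24, neg_neg]
  have h43 : ⁅b 3, b 2⁆ = b 2 := by rw [← lie_skew, h34, neg_neg]
  have key' : ∀ u0 u1 u2 u3 v0 v1 v2 v3 : ℝ,
      ⁅u0 • b 0 + u1 • b 1 + u2 • b 2 + u3 • b 3,
       v0 • b 0 + v1 • b 1 + v2 • b 2 + v3 • b 3⁆
      = (u3 * v1 - u1 * v3) • b 0 + (u3 * v2 - u2 * v3) • b 2 := by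
    intro u0 u1 u2 u3 v0 v1 v2 v3
    simp only [add_lie, lie_add, smul_lie, lie_smul, h12, h13, h14, h23, h24, h34,
      h21, h31, h41, h32, h42, h43, lie_self, smul_zero, zero_add, add_zero,
      smul_neg, smul_smul]
    module
  have expand : ∀ x : L,
      x = b.repr x 0 • b 0 + b.repr x 1 • b 1 + b.repr x 2 • b 2 + b.repr x 3 • b 3 := by
    intro x
    have := b.sum_repr x
    rw [Fin.sum_univ_four] at this
    exact this.symm
  constructor
  · intro h
    -- notation for matrix entries
    set t : Fin 4 → Fin 4 → ℝ := fun i j => b.repr (T (b i)) j with ht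
    have TB : ∀ i, T (b i) = t i 0 • b 0 + t i 1 • b 1 + t i 2 • b 2 + t i 3 • b 3 :=
      fun i => expand (T (b i))
    have comp : ∀ c0 c1 c2 c3 d0 d1 d2 d3 : ℝ,
        c0 • b 0 + c1 • b 1 + c2 • b 2 + c3 • b 3 =
        d0 • b 0 + d1 • b 1 + d2 • b 2 + d3 • b 3 →
        c0 = d0 ∧ c1 = d1 ∧ c2 = d2 ∧ c3 = d3 := by
      intro c0 c1 c2 c3 d0 d1 d2 d3 hcd
      have e0 := congrArg (fun z => b.repr z 0) hcd
      have e1 := congrArg (fun z => b.repr z 1) hcd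
      have e2 := congrArg (fun z => b.repr z 2) hcd
      have e3 := congrArg (fun z => b.repr z 3) hcd
      simp [Module.Basis.repr_self, Finsupp.single_apply] at e0 e1 e2 e3
      exact ⟨e0, e1, e2, e3⟩
    -- pair (1,3)
    have E : -(t 0 0 • b 0 + t 0 1 • b 1 + t 0 2 • b 2 + t 0 3 • b 3)
        = (t 1 3 * t 3 1 - t 1 1 * t 3 3) • b 0 + (t 1 3 * t 3 2 - t 1 2 * t 3 3) • b 2 := by
      have := h (b 1) (b 3)
      rw [h24, map_neg, TB 0, TB 1, TB 3, key'] at this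
      exact this
    rw [show -(t 0 0 • b 0 + t 0 1 • b 1 + t 0 2 • b 2 + t 0 3 • b 3)
        = (-t 0 0) • b 0 + (-t 0 1) • b 1 + (-t 0 2) • b 2 + (-t 0 3) • b 3 by module,
      show ((t 1 3 * t 3 1 - t 1 1 * t 3 3) • b 0 + (t 1 3 * t 3 2 - t 1 2 * t 3 3) • b 2 : L)
        = (t 1 3 * t 3 1 - t 1 1 * t 3 3) • b 0 + (0:ℝ) • b 1
          + (t 1 3 * t 3 2 - t 1 2 * t 3 3) • b 2 + (0:ℝ) • b 3 by module] at E
    obtain ⟨E0, E1, E2, E3⟩ := comp _ _ _ _ _ _ _ _ E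
    -- pair (2,3)
    have F : -(t 2 0 • b 0 + t 2 1 • b 1 + t 2 2 • b 2 + t 2 3 • b 3)
        = (t 2 3 * t 3 1 - t 2 1 * t 3 3) • b 0 + (t 2 3 * t 3 2 - t 2 2 * t 3 3) • b 2 := by
      have := h (b 2) (b 3)
      rw [h34, map_neg, TB 2, TB 3, key'] at this
      exact this
    rw [show -(t 2 0 • b 0 + t 2 1 • b 1 + t 2 2 • b 2 + t 2 3 • b 3)
        = (-t 2 0) • b 0 + (-t 2 1) • b 1 + (-t 2 2) • b 2 + (-t 2 3) • b 3 by module,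
      show ((t 2 3 * t 3 1 - t 2 1 * t 3 3) • b 0 + (t 2 3 * t 3 2 - t 2 2 * t 3 3) • b 2 : L)
        = (t 2 3 * t 3 1 - t 2 1 * t 3 3) • b 0 + (0:ℝ) • b 1
          + (t 2 3 * t 3 2 - t 2 2 * t 3 3) • b 2 + (0:ℝ) • b 3 by module] at F
    obtain ⟨F0, F1, F2, F3⟩ := comp _ _ _ _ _ _ _ _ F
    -- pair (0,3)
    have G : ((0:ℝ) • b 0 + (0:ℝ) • b 1 + (0:ℝ) • b 2 + (0:ℝ) • b 3 : L)
        = (t 0 3 * t 3 1 - t 0 1 * t 3 3) • b 0 + (0:ℝ) • b 1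
          + (t 0 3 * t 3 2 - t 0 2 * t 3 3) • b 2 + (0:ℝ) • b 3 := by
      have := h (b 0) (b 3)
      rw [h14, map_zero, TB 0, TB 3, key'] at this
      rw [show ((0:ℝ) • b 0 + (0:ℝ) • b 1 + (0:ℝ) • b 2 + (0:ℝ) • b 3 : L) = 0 by module]
      rw [this]; module
    obtain ⟨G0, -, G2, -⟩ := comp _ _ _ _ _ _ _ _ G
    -- pair (1,2)
    have H : ((0:ℝ) • b 0 + (0:ℝ) • b 1 + (0:ℝ) • b 2 + (0:ℝ) • b 3 : L)
        = (t 1 3 * t 2 1 - t 1 1 * t 2 3) • b 0 + (0:ℝ) • b 1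
          + (t 1 3 * t 2 2 - t 1 2 * t 2 3) • b 2 + (0:ℝ) • b 3 := by
      have := h (b 1) (b 2)
      rw [h23, map_zero, TB 1, TB 2, key'] at this
      rw [show ((0:ℝ) • b 0 + (0:ℝ) • b 1 + (0:ℝ) • b 2 + (0:ℝ) • b 3 : L) = 0 by module]
      rw [this]; module
    obtain ⟨-, -, H2, -⟩ := comp _ _ _ _ _ _ _ _ H
    -- derive the structure
    have t01 : t 0 1 = 0 := by linarith
    have t03 : t 0 3 = 0 := by linarith
    have t21 : t 2 1 = 0 := by linarith
    have t23 : t 2 3 = 0 := by linarith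
    have t20 : t 2 0 = 0 := by
      have := F0; rw [t21, t23] at this; simp at this; linarith
    have hT2 : T (b 2) = t 2 2 • b 2 := by
      rw [TB 2, t20, t21, t23]; module
    have t22ne : t 2 2 ≠ 0 := by
      intro hz
      have : T (b 2) = 0 := by rw [hT2, hz, zero_smul]
      have : (b 2 : L) = 0 := by
        have := congrArg T.symm this
        simpa using this
      exact b.ne_zero 2 this
    have t33 : t 3 3 = 1 := by
      have : t 2 2 * (t 3 3 - 1) = 0 := by
        rw [t23] at F2; ring_nf at F2 ⊢; linarith
      rcases mul_eq_zero.mp this with h' | h'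
      · exact absurd h' t22ne
      · linarith
    have t02 : t 0 2 = 0 := by
      rw [t03, t33] at G2; simpa using G2.symm
    have t13 : t 1 3 = 0 := by
      rw [t23] at H2
      have : t 1 3 * t 2 2 = 0 := by linarith
      rcases mul_eq_zero.mp this with h' | h'
      · exact h'
      · exact absurd h' t22ne
    have t11 : t 1 1 = t 0 0 := by rw [t13, t33] at E0; linarith
    have t12 : t 1 2 = 0 := by rw [t13, t33, t02] at E2; linarith
    have hT0 : T (b 0) = t 0 0 • b 0 := by
      rw [TB 0, t01, t02, t03]; module
    have t00ne : t 0 0 ≠ 0 := by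
      intro hz
      have : T (b 0) = 0 := by rw [hT0, hz, zero_smul]
      have : (b 0 : L) = 0 := by
        have := congrArg T.symm this
        simpa using this
      exact b.ne_zero 0 this
    refine ⟨t 0 0, t 2 2, t 1 0, t 3 0, t 3 1, t 3 2, t00ne, t22ne, hT0, ?_, hT2, ?_⟩
    · rw [TB 1, t11, t12, t13]; module
    · rw [TB 3, t33]; module
  · rintro ⟨a, c, bb, p, q, r, ha, hc, h1, h2, h3, h4⟩ x y
    have hTx : ∀ x : L, T x = (a * b.repr x 0 + bb * b.repr x 1 + p * b.repr x 3) • b 0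
        + (a * b.repr x 1 + q * b.repr x 3) • b 1
        + (c * b.repr x 2 + r * b.repr x 3) • b 2 + (b.repr x 3) • b 3 := by
      intro z
      conv_lhs => rw [expand z]
      simp only [map_add, map_smul, h1, h2, h3, h4]
      module
    have hbr : ⁅x, y⁆ = (b.repr x 3 * b.repr y 1 - b.repr x 1 * b.repr y 3) • b 0
        + (b.repr x 3 * b.repr y 2 - b.repr x 2 * b.repr y 3) • b 2 := by
      conv_lhs => rw [expand x, expand y]
      rw [key']
    rw [hTx x, hTx y, key', hbr, map_add, map_smul, map_smul, h1, h3]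
    module
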